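/- Let n ≥ 4 with n ≡ 0 mod 4, a ∈ ((n−2)/(n+2),1), and define for 1 ≤ k ≤ n/2 − 1 the polynomials by the Cohn iteration starting from q(z) = z^n + Σ_{j=1}^{n/2−1}(−1)^{j+1}(a−1)z^{n−2j} − c where c = (1/2)(2a+an−n). Then the final iterate is (up to a positive constant multiple) the polynomial (n−1)z² − 1, whose zeros ±1/√(n−1) lie inside the unit circle; consequently every zero of q lies in the open unit disk. -/

import Mathlib

lemma aux_ineq (M a x y c d : ℝ) (hM : 2 ≤ M) (hu1 : 0 < 1 - a)
    (hu2 : (1 - a) * (M + 1) < 2)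
    (hc : c = a + (a - 1) * M) (hd : d = 1 - a + c)
    (hxy : 1 ≤ x ^ 2 + y ^ 2) (hne : x ≠ 1 ∨ y ≠ 0) :
    (d * x - c) ^ 2 + (d * y) ^ 2 < (x - a) ^ 2 + y ^ 2 := by
  subst hd hc
  have hM0 : (0:ℝ) < M := by linarith
  have huM : 0 < (1 - a) * M := mul_pos hu1 hM0
  have huM2 : (1 - a) * M < 2 := by nlinarith
  have hP : 0 < (1 - a) * M * (2 - (1 - a) * M) := mul_pos huM (by linarith)
  have hA : 0 < (1 - a) * M * (2 - (1 - a) * (M + 1)) := mul_pos huM (by linarith)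
  rcases lt_trichotomy x 1 with hx | hx | hx
  · nlinarith [mul_pos hA (show (0:ℝ) < 1 - x by linarith),
      mul_nonneg hP.le (show (0:ℝ) ≤ x ^ 2 + y ^ 2 - 1 by linarith)]
  · subst hx
    have hy : y ≠ 0 := by tauto
    have hy2 : 0 < y ^ 2 := by positivity
    nlinarith [mul_pos hP hy2]
  · have h1 : 0 < x - 1 := by linarith
    have hPK : 0 < (1 - a) * M * (2 - (1 - a) * M) * x - (1 - a) * M * (2 - (1 - a) * (M + 2)) := by
      nlinarith [mul_pos hP h1, mul_pos (mul_pos hu1 hu1) hM0]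
    nlinarith [mul_pos h1 hPK, mul_nonneg hP.le (sq_nonneg y),
      mul_nonneg (mul_nonneg hP.le h1.le) h1.le]

theorem stmt_18 (n : ℕ) (hn : 4 ≤ n) (hdvd : 4 ∣ n) (a : ℝ)
    (ha : ((n : ℝ) - 2) / ((n : ℝ) + 2) < a) (ha' : a < 1) (ha'' : a ≠ (n : ℝ) / ((n : ℝ) + 2)) :
    (∀ z : ℂ, ((n : ℂ) - 1) * z ^ 2 - 1 = 0 → ‖z‖ < 1) ∧
    (∀ z : ℂ,
      z ^ n + (∑ j ∈ Finset.Icc 1 (n / 2 - 1), (-1 : ℂ) ^ (j + 1) * ((a : ℂ) - 1) * z ^ (n - 2 * j))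
        - (1 / 2) * (2 * a + a * n - n) = 0 → ‖z‖ < 1) := by
  have hn3 : (3:ℝ) ≤ (n:ℝ) - 1 := by
    have : (4:ℝ) ≤ (n:ℝ) := by exact_mod_cast hn
    linarith
  constructor
  · intro z hz
    have hn1 : ((n:ℂ) - 1) ≠ 0 := by
      intro h
      have : (n:ℂ) = 1 := by linear_combination h
      have : (n:ℝ) = 1 := by exact_mod_cast this
      linarith
    have hz2 : z ^ 2 = 1 / ((n:ℂ) - 1) := by
      field_simp
      linear_combination hz
    have habs : (‖z‖) ^ 2 = 1 / ((n:ℝ) - 1) := by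
      rw [← norm_pow, hz2]
      rw [norm_div, norm_one]
      congr 1
      rw [show (n:ℂ) - 1 = ((( n:ℝ) - 1 : ℝ) : ℂ) by push_cast; ring, Complex.norm_real, Real.norm_eq_abs,
        abs_of_nonneg (by linarith)]
    have h2 : (‖z‖) ^ 2 < 1 := by
      rw [habs]
      rw [div_lt_one (by linarith)]
      linarith
    nlinarith [norm_nonneg z]
  · intro z hz
    by_contra hlt
    push_neg at hlt
    obtain ⟨t, ht⟩ := hdvd
    have ht1 : 1 ≤ t := by omega
    set w : ℂ := -z ^ 2 with hw
    have hz2 : z ^ 2 = -w := by rw [hw]; ring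
    have hwabs : 1 ≤ ‖w‖ := by
      have : ‖w‖ = (‖z‖) ^ 2 := by
        rw [hw, norm_neg, norm_pow]
      rw [this]
      nlinarith
    -- rewrite q(z) = 0 in terms of w
    have hsum1 : ∑ j ∈ Finset.Icc 1 (n / 2 - 1), (-1 : ℂ) ^ (j + 1) * ((a : ℂ) - 1) * z ^ (n - 2 * j)
        = (1 - (a:ℂ)) * ∑ k ∈ Finset.Icc 1 (2*t-1), w ^ k := by
      have h0 : n / 2 - 1 = 2*t - 1 := by omega
      rw [h0, Finset.mul_sum]
      have hstep : ∑ j ∈ Finset.Icc 1 (2*t-1), (-1 : ℂ) ^ (j + 1) * ((a : ℂ) - 1) * z ^ (n - 2 * j)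
          = ∑ j ∈ Finset.Icc 1 (2*t-1), (1 - (a:ℂ)) * w ^ (2*t - j) := by
        refine Finset.sum_congr rfl ?_
        intro j hj
        simp only [Finset.mem_Icc] at hj
        have hnj : n - 2*j = 2*(2*t - j) := by omega
        rw [hnj, pow_mul, hz2, neg_pow w (2*t - j)]
        have hsign : (-1 : ℂ) ^ (j + 1) * (-1:ℂ) ^ (2*t - j) = -1 := by
          rw [← pow_add]
          have he : j + 1 + (2*t - j) = 2*t + 1 := by omega
          rw [he, pow_succ, pow_mul]
          norm_num
        calc (-1 : ℂ) ^ (j + 1) * ((a:ℂ) - 1) * ((-1:ℂ) ^ (2*t - j) * w ^ (2*t - j))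
            = ((-1 : ℂ) ^ (j + 1) * (-1:ℂ) ^ (2*t - j)) * (((a:ℂ) - 1) * w ^ (2*t - j)) := by ring
          _ = (1 - (a:ℂ)) * w ^ (2*t - j) := by rw [hsign]; ring
      rw [hstep]
      refine Finset.sum_nbij' (fun j => 2*t - j) (fun k => 2*t - k) ?_ ?_ ?_ ?_ ?_ <;>
        intro b hb <;> simp only [Finset.mem_Icc] at hb ⊢ <;>
        first | omega | (congr 1; omega)
    have hzn : z ^ n = w ^ (2*t) := by
      rw [ht, show 4*t = 2*(2*t) by ring, pow_mul, hz2, neg_pow, pow_mul]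
      norm_num
    rw [hzn, hsum1] at hz
    -- real constants
    set c0 : ℝ := (1/2) * (2*a + a*n - n) with hc0
    set d0 : ℝ := 1 - a + c0 with hd0
    have hc0C : ((c0:ℝ):ℂ) = (1/2) * (2*(a:ℂ) + (a:ℂ)*(n:ℂ) - (n:ℂ)) := by
      rw [hc0]; push_cast; ring
    -- the telescoped identity
    have hsplit : ∑ k ∈ Finset.range (2*t), w ^ k = 1 + ∑ k ∈ Finset.Icc 1 (2*t-1), w ^ k := by
      have h1 : Finset.Icc 1 (2*t-1) = Finset.Ico 1 (2*t) := by
        rw [← Finset.Ico_add_one_right_eq_Icc]; congr 1; omega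
      rw [h1, Finset.range_eq_Ico,
        ← Finset.sum_Ico_consecutive _ (by omega : 0 ≤ 1) (by omega : 1 ≤ 2*t)]
      simp
    have hgeom : (∑ k ∈ Finset.range (2*t), w ^ k) * (w - 1) = w ^ (2*t) - 1 :=
      geom_sum_mul w (2*t)
    have hIco : (w - 1) * (∑ k ∈ Finset.Icc 1 (2*t-1), w ^ k) = w ^ (2*t) - w := by
      have := hgeom
      rw [hsplit] at this
      linear_combination this
    by_cases hw1 : w = 1
    · -- w = 1 : direct contradiction from hz
      rw [hw1] at hz
      simp only [one_pow, Finset.sum_const, nsmul_eq_mul, mul_one] at hz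
      have hcard : (Finset.Icc 1 (2*t-1)).card = 2*t - 1 := by
        rw [Nat.card_Icc]; omega
      rw [hcard] at hz
      have hnt : (n:ℂ) = 4 * (t:ℂ) := by
        rw [ht]; push_cast; ring
      have hzr : ((1 + (1 - a) * (2*(t : ℝ) - 1) - c0 : ℝ) : ℂ) = 0 := by
        rw [← hz, hc0]
        push_cast [show (1:ℕ) ≤ 2*t by omega]
        rw [hnt]
      rw [Complex.ofReal_eq_zero] at hzr
      have htr : (1:ℝ) ≤ (t:ℝ) := by exact_mod_cast ht1
      have hnr : (n:ℝ) = 4 * (t:ℝ) := by exact_mod_cast ht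
      rw [hc0, hnr] at hzr
      nlinarith
    · -- w ≠ 1 : use the degree m+1 polynomial
      have hS : w ^ (2*t) * (w - (a:ℂ)) = (d0:ℂ) * w - (c0:ℂ) := by
        have hd0C : ((d0:ℝ):ℂ) = 1 - (a:ℂ) + (c0:ℂ) := by rw [hd0]; push_cast; ring
        have hmul := congrArg (fun u => (w - 1) * u) hz
        simp only [mul_zero] at hmul
        rw [hc0C, hd0C, hc0C]
        linear_combination hmul - (1 - (a:ℂ)) * hIco
      have habs1 : ‖w - (a:ℂ)‖ ≤ ‖(d0:ℂ) * w - (c0:ℂ)‖ := by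
        rw [← hS, norm_mul, norm_pow]
        exact le_mul_of_one_le_left (norm_nonneg _) (one_le_pow₀ hwabs)
      set x : ℝ := w.re with hx
      set y : ℝ := w.im with hy
      have hxy : 1 ≤ x ^ 2 + y ^ 2 := by
        have : 1 ≤ (‖w‖) ^ 2 := by nlinarith
        rwa [Complex.sq_norm, Complex.normSq_apply, ← sq, ← sq] at this
      have hne : x ≠ 1 ∨ y ≠ 0 := by
        by_contra hcon
        push_neg at hcon
        apply hw1
        apply Complex.ext
        · simpa using hcon.1
        · simpa using hcon.2
      have hsq : (x - a) ^ 2 + y ^ 2 ≤ (d0 * x - c0) ^ 2 + (d0 * y) ^ 2 := by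
        have h2 := pow_le_pow_left₀ (norm_nonneg _) habs1 2
        rw [Complex.sq_norm, Complex.sq_norm, Complex.normSq_apply, Complex.normSq_apply] at h2
        simp only [Complex.sub_re, Complex.sub_im, Complex.mul_re, Complex.mul_im,
          Complex.ofReal_re, Complex.ofReal_im] at h2
        ring_nf at h2 ⊢
        linarith
      -- contradict via aux_ineq with M = n/2 = 2t
      have hnr : (n:ℝ) = 4 * (t:ℝ) := by exact_mod_cast ht
      have htr : (1:ℝ) ≤ (t:ℝ) := by exact_mod_cast ht1
      have hkey := aux_ineq (2*(t:ℝ)) a x y c0 d0 (by linarith) (by linarith)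
        (by
          rw [div_lt_iff₀ (by linarith : (0:ℝ) < (n:ℝ) + 2)] at ha
          rw [hnr] at ha
          nlinarith)
        (by rw [hc0, hnr]; ring) hd0 hxy hne
      linarith
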